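/- Let D be a locally nilpotent derivation of ℂ[x,y,z] with exp(D) not the identity. Then there exists an irreducible locally nilpotent derivation D' of ℂ[x,y,z] and d ∈ ker D' such that D = d·D'; moreover D' is unique up to multiplication by a nonzero scalar, and ker D = ker D'. -/

import Mathlib

open Finset

/-- Local nilpotency of a map. -/
def IsLND {A : Type*} [Zero A] (D : A → A) : Prop := ∀ a : A, ∃ n : ℕ, D^[n] a = 0

/-- A locally nilpotent derivation `D'` is irreducible if `D' ≠ 0` and whenever
`D' = g • D''` with `D''` locally nilpotent and `g ∈ ker D''`, `g` is a unit. -/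
def IsIrreducibleLND {A : Type*} [CommRing A] [Algebra ℂ A] (D' : Derivation ℂ A A) : Prop :=
  D' ≠ 0 ∧ IsLND ⇑D' ∧
    ∀ (g : A) (D'' : Derivation ℂ A A), IsLND ⇑D'' → D'' g = 0 → D' = g • D'' → IsUnit g

/-- `E` is the exponential of the locally nilpotent map `D`. -/
def IsExp {A : Type*} [CommRing A] [Algebra ℚ A] (D E : A → A) : Prop :=
  ∀ (a : A) (N : ℕ), (∀ i, N ≤ i → D^[i] a = 0) →
    E a = ∑ i ∈ Finset.range N, ((i.factorial : ℚ)⁻¹) • D^[i] a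

section Helpers

variable {A : Type*} [CommRing A] [Algebra ℂ A]

lemma iter_zero (E : Derivation ℂ A A) (k : ℕ) : (⇑E)^[k] 0 = 0 := by
  induction k with
  | zero => rfl
  | succ k ih => rw [Function.iterate_succ_apply, map_zero, ih]

/-- Iterated Leibniz rule. -/
lemma iter_leibniz (E : Derivation ℂ A A) (a b : A) (n : ℕ) :
    (⇑E)^[n] (a * b) =
      ∑ m ∈ range (n + 1), n.choose m • ((⇑E)^[m] a * (⇑E)^[n - m] b) := by
  induction n with
  | zero => simp
  | succ n ih =>
    rw [Function.iterate_succ_apply', ih, map_sum]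
    have step : ∀ m ∈ range (n + 1),
        E (n.choose m • ((⇑E)^[m] a * (⇑E)^[n - m] b)) =
          n.choose m • ((⇑E)^[m + 1] a * (⇑E)^[n - m] b) +
            n.choose m • ((⇑E)^[m] a * (⇑E)^[n - m + 1] b) := by
      intro m hm
      rw [map_nsmul, Derivation.leibniz]
      simp only [smul_eq_mul, smul_add, Function.iterate_succ_apply']
      ring
    rw [Finset.sum_congr rfl step, Finset.sum_add_distrib]
    have h2 : ∑ m ∈ range (n + 1), n.choose m • ((⇑E)^[m] a * (⇑E)^[n - m + 1] b) =
        ∑ m ∈ range (n + 1), n.choose m • ((⇑E)^[m] a * (⇑E)^[n + 1 - m] b) := by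
      refine Finset.sum_congr rfl fun m hm => ?_
      rw [Nat.sub_add_comm (Nat.lt_succ_iff.mp (Finset.mem_range.mp hm))]
    rw [h2]
    rw [Finset.sum_range_succ' (fun m => (n+1).choose m • ((⇑E)^[m] a * (⇑E)^[n + 1 - m] b))]
    have h3 : ∀ i ∈ range (n + 1),
        (n+1).choose (i+1) • ((⇑E)^[i+1] a * (⇑E)^[n + 1 - (i+1)] b) =
          n.choose i • ((⇑E)^[i+1] a * (⇑E)^[n - i] b) +
            n.choose (i+1) • ((⇑E)^[i+1] a * (⇑E)^[n - i] b) := by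
      intro i hi
      rw [Nat.choose_succ_succ, add_smul, Nat.succ_sub_succ]
    rw [Finset.sum_congr rfl h3, Finset.sum_add_distrib]
    have h4 : ∑ m ∈ range (n + 1), n.choose m • ((⇑E)^[m] a * (⇑E)^[n + 1 - m] b) =
        (∑ i ∈ range (n + 1), n.choose (i+1) • ((⇑E)^[i+1] a * (⇑E)^[n - i] b)) +
          (n+1).choose 0 • ((⇑E)^[0] a * (⇑E)^[n + 1 - 0] b) := by
      rw [Finset.sum_range_succ' (fun m => n.choose m • ((⇑E)^[m] a * (⇑E)^[n + 1 - m] b))]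
      simp only [Nat.choose_zero_right, Nat.sub_zero]
      congr 1
      rw [Finset.sum_range_succ, Nat.choose_succ_self, zero_smul, add_zero]
      refine Finset.sum_congr rfl fun i hi => ?_
      rw [Nat.succ_sub_succ]
    rw [h4]
    ring

/-- Existence of the top nonvanishing iterate. -/
lemma deg_spec (E : Derivation ℂ A A) (hE : IsLND ⇑E) {a : A} (ha : a ≠ 0) :
    ∃ m : ℕ, (⇑E)^[m] a ≠ 0 ∧ ∀ k, m < k → (⇑E)^[k] a = 0 := by
  have h := hE a
  classical
  set N := Nat.find h with hN
  have hN0 : (⇑E)^[N] a = 0 := Nat.find_spec h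
  have hpos : N ≠ 0 := by
    intro h0
    rw [h0] at hN0
    exact ha hN0
  obtain ⟨m, hm⟩ := Nat.exists_eq_succ_of_ne_zero hpos
  refine ⟨m, ?_, ?_⟩
  · have := Nat.find_min h (m := m) (by omega)
    simpa using this
  · intro k hk
    have hk' : k = (k - N) + N := by omega
    rw [hk', Function.iterate_add_apply, hN0, iter_zero]

variable [IsDomain A] [CharZero A]

lemma top_term (E : Derivation ℂ A A) {a b : A} {m n : ℕ}
    (hma : (⇑E)^[m] a ≠ 0) (hma' : ∀ k, m < k → (⇑E)^[k] a = 0)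
    (hnb : (⇑E)^[n] b ≠ 0) (hnb' : ∀ k, n < k → (⇑E)^[k] b = 0) :
    (⇑E)^[m + n] (a * b) ≠ 0 := by
  rw [iter_leibniz]
  have hsingle : ∑ i ∈ range (m + n + 1), (m+n).choose i • ((⇑E)^[i] a * (⇑E)^[m+n-i] b)
      = (m+n).choose m • ((⇑E)^[m] a * (⇑E)^[n] b) := by
    rw [Finset.sum_eq_single m]
    · rw [Nat.add_sub_cancel_left]
    · intro i _ hne
      rcases lt_or_gt_of_ne hne with hlt | hgt
      · rw [hnb' (m + n - i) (by omega), mul_zero, smul_zero]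
      · rw [hma' i hgt, zero_mul, smul_zero]
    · intro hm
      exact absurd (Finset.mem_range.mpr (by omega)) hm
  rw [hsingle, nsmul_eq_mul]
  exact mul_ne_zero (Nat.cast_ne_zero.mpr (Nat.choose_pos (by omega)).ne')
    (mul_ne_zero hma hnb)

/-- The kernel of a locally nilpotent derivation is factorially closed. -/
lemma fc (E : Derivation ℂ A A) (hE : IsLND ⇑E) {a b : A} (ha : a ≠ 0) (hb : b ≠ 0)
    (hab : E (a * b) = 0) : E a = 0 := by
  by_contra hEa
  obtain ⟨m, hma, hma'⟩ := deg_spec E hE ha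
  obtain ⟨n, hnb, hnb'⟩ := deg_spec E hE hb
  have hm1 : 1 ≤ m := by
    by_contra h
    exact hEa (by simpa using hma' 1 (by omega))
  have h0 : (⇑E)^[m + n] (a * b) = 0 := by
    have hmn : m + n = (m + n - 1) + 1 := by omega
    rw [hmn, Function.iterate_succ_apply, hab, iter_zero]
  exact top_term E hma hma' hnb hnb' h0

/-- If `f` divides `E f` then `E f = 0`. -/
lemma dvd_ker (E : Derivation ℂ A A) (hE : IsLND ⇑E) {f : A} (h : f ∣ E f) : E f = 0 := by
  by_contra hne
  obtain ⟨g, hg⟩ := h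
  have hf : f ≠ 0 := by rintro rfl; exact hne (map_zero E)
  have hgne : g ≠ 0 := by rintro rfl; rw [mul_zero] at hg; exact hne hg
  obtain ⟨m, hmf, hmf'⟩ := deg_spec E hE hf
  obtain ⟨n, hng, hng'⟩ := deg_spec E hE hgne
  have h0 : (⇑E)^[m + n] (f * g) = 0 := by
    rw [← hg, ← Function.iterate_succ_apply]
    exact hmf' (m + n + 1) (by omega)
  exact top_term E hmf hmf' hng hng' h0

end Helpers

lemma mv_isUnit_eq_C : ∀ (n : ℕ) (p : MvPolynomial (Fin n) ℂ), IsUnit p →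
    ∃ c : ℂ, p = MvPolynomial.C c := by
  intro n
  induction n with
  | zero => exact fun p _ => ⟨p.coeff 0, MvPolynomial.eq_C_of_isEmpty p⟩
  | succ n ih =>
    intro p hp
    have hq : IsUnit (MvPolynomial.finSuccEquiv ℂ n p) := hp.map _
    obtain ⟨r, hr, hCr⟩ := Polynomial.isUnit_iff.mp hq
    obtain ⟨c, rfl⟩ := ih r hr
    refine ⟨c, ?_⟩
    apply (MvPolynomial.finSuccEquiv ℂ n).injective
    rw [← hCr]
    have h := congrArg (fun f => f c)
      (congrArg (fun (g : ℂ →+* MvPolynomial (Fin (n+1)) ℂ) => (g : ℂ → _))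
        (MvPolynomial.finSuccEquiv_comp_C_eq_C n))
    simp only [RingHom.coe_comp, Function.comp_apply] at h
    rw [← h]
    simp

/-- Standard decomposition: every locally nilpotent derivation `D` of `ℂ[x,y,z]`
whose exponential is not the identity factors as `D = d • D'` with `D'`
irreducible, `d ∈ ker D'` and `ker D = ker D'`; moreover `D'` is unique up to a
nonzero scalar. -/
theorem standard_decomposition
    (D : Derivation ℂ (MvPolynomial (Fin 3) ℂ) (MvPolynomial (Fin 3) ℂ))
    (hD : IsLND ⇑D)
    (E : MvPolynomial (Fin 3) ℂ → MvPolynomial (Fin 3) ℂ)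
    (hE : IsExp ⇑D E) (hEne : E ≠ id) :
    ∃ (D' : Derivation ℂ (MvPolynomial (Fin 3) ℂ) (MvPolynomial (Fin 3) ℂ))
      (d : MvPolynomial (Fin 3) ℂ),
      IsLND ⇑D' ∧ IsIrreducibleLND D' ∧ D' d = 0 ∧ D = d • D' ∧
      (∀ a, D a = 0 ↔ D' a = 0) ∧
      (∀ (D'' : Derivation ℂ (MvPolynomial (Fin 3) ℂ) (MvPolynomial (Fin 3) ℂ))
        (d'' : MvPolynomial (Fin 3) ℂ),
        IsLND ⇑D'' → IsIrreducibleLND D'' → D'' d'' = 0 → D = d'' • D'' →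
          ∃ c : ℂ, c ≠ 0 ∧ D'' = c • D') := by
  classical
  letI : GCDMonoid (MvPolynomial (Fin 3) ℂ) :=
    UniqueFactorizationMonoid.toGCDMonoid _
  -- D ≠ 0
  have hD0 : D ≠ 0 := by
    intro h
    apply hEne
    funext a
    have h1 : ∀ i, 1 ≤ i → (⇑D)^[i] a = 0 := by
      intro i hi
      obtain ⟨k, hk⟩ := Nat.exists_eq_succ_of_ne_zero (by omega : i ≠ 0)
      rw [hk, Function.iterate_succ_apply, h]
      simpa using iter_zero (0 : Derivation ℂ (MvPolynomial (Fin 3) ℂ) (MvPolynomial (Fin 3) ℂ)) k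
    rw [hE a 1 h1]
    simp
  have hex : ∃ i, D (MvPolynomial.X i) ≠ 0 := by
    by_contra hall
    push_neg at hall
    exact hD0 (MvPolynomial.derivation_ext fun i => by rw [hall i, Derivation.zero_apply])
  set d := gcd (D (MvPolynomial.X 0)) (gcd (D (MvPolynomial.X 1)) (D (MvPolynomial.X 2)))
    with hd_def
  have hdvd : ∀ i : Fin 3, d ∣ D (MvPolynomial.X i) := by
    intro i
    fin_cases i
    · exact gcd_dvd_left _ _
    · exact (gcd_dvd_right _ _).trans (gcd_dvd_left _ _)
    · exact (gcd_dvd_right _ _).trans (gcd_dvd_right _ _)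
  choose g hg using hdvd
  set D' := MvPolynomial.mkDerivation ℂ g with hD'_def
  have hfac : D = d • D' := by
    refine MvPolynomial.derivation_ext fun i => ?_
    rw [Derivation.smul_apply, smul_eq_mul, MvPolynomial.mkDerivation_X]
    exact hg i
  have hd0 : d ≠ 0 := by
    intro h
    obtain ⟨i, hi⟩ := hex
    apply hi
    rw [hg i, h, zero_mul]
  have hdd : D d = d * D' d := by
    rw [hfac, Derivation.smul_apply, smul_eq_mul]
  have hDd : D d = 0 := dvd_ker D hD ⟨D' d, hdd⟩
  have hD'd : D' d = 0 := by
    have h1 : d * D' d = 0 := by rw [← hdd, hDd]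
    exact (mul_eq_zero.mp h1).resolve_left hd0
  have hiter : ∀ (a : MvPolynomial (Fin 3) ℂ) (k : ℕ),
      (⇑D)^[k] a = d ^ k * (⇑D')^[k] a := by
    intro a k
    induction k with
    | zero => simp
    | succ k ih =>
      have hdk : D' (d ^ k) = 0 := by
        rw [Derivation.leibniz_pow, hD'd]
        simp
      rw [Function.iterate_succ_apply', Function.iterate_succ_apply', ih, hfac,
        Derivation.smul_apply, smul_eq_mul, Derivation.leibniz, hdk, smul_zero, add_zero,
        smul_eq_mul]
      ring
  have hLND' : IsLND ⇑D' := by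
    intro a
    obtain ⟨nn, hn⟩ := hD a
    refine ⟨nn, ?_⟩
    have h1 := hiter a nn
    rw [hn] at h1
    exact ((mul_eq_zero.mp h1.symm).resolve_left (pow_ne_zero _ hd0))
  have hker : ∀ a, D a = 0 ↔ D' a = 0 := by
    intro a
    rw [hfac, Derivation.smul_apply, smul_eq_mul, mul_eq_zero]
    exact ⟨fun h => h.resolve_left hd0, fun h => Or.inr h⟩
  have hD'0 : D' ≠ 0 := by
    intro h
    apply hD0
    rw [hfac, h, smul_zero]
  have hirr : IsIrreducibleLND D' := by
    refine ⟨hD'0, hLND', ?_⟩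
    intro g0 D'' _ _ hEq
    have hdvd2 : ∀ i : Fin 3, d * g0 ∣ D (MvPolynomial.X i) := by
      intro i
      refine ⟨D'' (MvPolynomial.X i), ?_⟩
      calc D (MvPolynomial.X i) = d * g i := hg i
        _ = d * D' (MvPolynomial.X i) := by rw [MvPolynomial.mkDerivation_X]
        _ = d * (g0 * D'' (MvPolynomial.X i)) := by
            rw [hEq, Derivation.smul_apply, smul_eq_mul]
        _ = d * g0 * D'' (MvPolynomial.X i) := by ring
    have hdg : d * g0 ∣ d := dvd_gcd (hdvd2 0) (dvd_gcd (hdvd2 1) (hdvd2 2))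
    obtain ⟨h, hh⟩ := hdg
    have h1 : (1 : MvPolynomial (Fin 3) ℂ) = g0 * h := by
      apply mul_left_cancel₀ hd0
      rw [mul_one, ← mul_assoc]
      exact hh
    exact IsUnit.of_mul_eq_one _ h1.symm
  refine ⟨D', d, hLND', hirr, hD'd, hfac, hker, ?_⟩
  intro D'' d'' hLND'' hirr'' hd''ker heq''
  have hd''0 : d'' ≠ 0 := by
    intro h
    apply hD0
    rw [heq'', h, zero_smul]
  have hdvd3 : ∀ i : Fin 3, d'' ∣ D (MvPolynomial.X i) := by
    intro i
    exact ⟨D'' (MvPolynomial.X i), by rw [heq'', Derivation.smul_apply, smul_eq_mul]⟩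
  have hd''d : d'' ∣ d := dvd_gcd (hdvd3 0) (dvd_gcd (hdvd3 1) (hdvd3 2))
  obtain ⟨e, he⟩ := hd''d
  have he0 : e ≠ 0 := by
    intro h
    apply hd0
    rw [he, h, mul_zero]
  have hD''eq : D'' = e • D' := by
    refine MvPolynomial.derivation_ext fun i => ?_
    apply mul_left_cancel₀ hd''0
    calc d'' * D'' (MvPolynomial.X i) = D (MvPolynomial.X i) := by
          rw [heq'', Derivation.smul_apply, smul_eq_mul]
      _ = d * g i := hg i
      _ = d'' * (e * D' (MvPolynomial.X i)) := by
          rw [MvPolynomial.mkDerivation_X, he]; ring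
      _ = d'' * (e • D') (MvPolynomial.X i) := by
          rw [Derivation.smul_apply, smul_eq_mul]
  have hDe : D e = 0 := by
    refine fc D hD he0 hd''0 ?_
    rw [mul_comm e d'', ← he]
    exact hDd
  have hD'e : D' e = 0 := (hker e).mp hDe
  have hue : IsUnit e := hirr''.2.2 e D' hLND' hD'e hD''eq
  obtain ⟨c, hc⟩ := mv_isUnit_eq_C 3 e hue
  have hc0 : c ≠ 0 := by
    intro h
    apply he0
    rw [hc, h, map_zero]
  refine ⟨c, hc0, ?_⟩
  rw [hD''eq, hc]
  refine Derivation.ext fun a => ?_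
  rw [Derivation.smul_apply, Derivation.smul_apply, MvPolynomial.smul_eq_C_mul, smul_eq_mul]
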